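/- Let X be a compact metric space, (μ_n) a sequence of Borel probability measures on X, and α a Borel automorphism of X. Assume that for every continuous function g on X, the difference ∫ (g∘α) dμ_n − ∫ g dμ_n tends to 0 as n→∞. Suppose further there exists a sequence (X_m) of closed subsets of X such that the restriction of α to each X_m is continuous and lim_{m→∞} liminf_{n→∞} μ_n(X_m) = 1. Then any weak* limit point μ of (μ_n) is α-invariant, i.e. α_*μ = μ. -/

import Mathlib

open MeasureTheory Filter Topology
open scoped ENNReal NNReal

/-- A measurable function bounded in absolute value is integrable w.r.t. a finite measure. -/
lemma stmt0_aux_integrable {X : Type*} [MeasurableSpace X] (ν : Measure X)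
    [IsFiniteMeasure ν] {f : X → ℝ} (hf : Measurable f) {M : ℝ} (hb : ∀ x, |f x| ≤ M) :
    Integrable f ν :=
  ⟨hf.aestronglyMeasurable,
    HasFiniteIntegral.of_bounded (C := M) (ae_of_all _ (by simpa [Real.norm_eq_abs] using hb))⟩

/-- Two bounded functions agreeing on a set `s` have integrals (w.r.t. a probability measure)
differing by at most `2 M ν(sᶜ)`. -/
lemma stmt0_aux_diff {X : Type*} [MeasurableSpace X] (ν : Measure X) [IsProbabilityMeasure ν]
    {u v : X → ℝ} (hu : Integrable u ν) (hv : Integrable v ν) {s : Set X}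
    (hs : MeasurableSet s) {M : ℝ} (hM : 0 ≤ M)
    (hub : ∀ x, |u x| ≤ M) (hvb : ∀ x, |v x| ≤ M)
    (heq : ∀ x ∈ s, u x = v x) :
    |(∫ x, u x ∂ν) - ∫ x, v x ∂ν| ≤ 2 * M * (ν sᶜ).toReal := by
  rw [← integral_sub hu hv]
  calc |∫ x, (u x - v x) ∂ν| ≤ ∫ x, |u x - v x| ∂ν := by
        simpa [Real.norm_eq_abs] using norm_integral_le_integral_norm (fun x => u x - v x) (μ := ν)
    _ ≤ ∫ x, sᶜ.indicator (fun _ => 2 * M) x ∂ν := by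
        apply integral_mono (hu.sub hv).abs ((integrable_const (2 * M)).indicator hs.compl)
        intro x
        by_cases hx : x ∈ s
        · have hxc : x ∉ sᶜ := fun h => h hx
          simp [Set.indicator_of_notMem hxc, heq x hx]
        · have hxc : x ∈ sᶜ := hx
          rw [Set.indicator_of_mem hxc]
          calc |u x - v x| ≤ |u x| + |v x| := abs_sub _ _
            _ ≤ 2 * M := by have := hub x; have := hvb x; linarith
    _ = (ν sᶜ).toReal • (2 * M) := integral_indicator_const _ hs.compl
    _ = 2 * M * (ν sᶜ).toReal := by rw [smul_eq_mul, mul_comm]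

/-- **Lemma 3.4 of [Io09]**: if Borel probability measures `μ n` on a compact metric space
become almost invariant under a Borel automorphism `α` which is continuous on closed sets
`Xm m` of almost full asymptotic measure, then any weak* limit point of the sequence
is `α`-invariant. -/
theorem stmt0 {X : Type*} [MetricSpace X] [CompactSpace X]
    [MeasurableSpace X] [BorelSpace X]
    (μseq : ℕ → Measure X) (hprob : ∀ n, IsProbabilityMeasure (μseq n))
    (α : X ≃ X) (hα : Measurable α) (hαinv : Measurable α.symm)
    (hconv : ∀ g : C(X, ℝ),
      Tendsto (fun n => (∫ x, g (α x) ∂(μseq n)) - ∫ x, g x ∂(μseq n)) atTop (𝓝 0))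
    (Xm : ℕ → Set X) (hclosed : ∀ m, IsClosed (Xm m))
    (hcont : ∀ m, ContinuousOn (fun x => α x) (Xm m))
    (hmass : Tendsto (fun m => atTop.liminf (fun n => ((μseq n) (Xm m)).toReal))
      atTop (𝓝 1))
    (μ : Measure X) (hμprob : IsProbabilityMeasure μ)
    (φ : ℕ → ℕ) (hφ : StrictMono φ)
    (hlim : ∀ g : C(X, ℝ),
      Tendsto (fun n => ∫ x, g x ∂(μseq (φ n))) atTop (𝓝 (∫ x, g x ∂μ))) :
    Measure.map (fun x => α x) μ = μ := by
  have hφtop : Tendsto φ atTop atTop := hφ.tendsto_atTop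
  -- auxiliary fact: compl measure toReal for probability measures
  have hcompl : ∀ (ν : Measure X), IsProbabilityMeasure ν → ∀ m,
      ((ν (Xm m)ᶜ).toReal) = 1 - (ν (Xm m)).toReal := by
    intro ν hν m
    haveI := hν
    rw [prob_compl_eq_one_sub (hclosed m).measurableSet,
      ENNReal.toReal_sub_of_le prob_le_one ENNReal.one_ne_top, ENNReal.toReal_one]
  -- weak* convergence of the subsequence as probability measures
  let μsP : ℕ → ProbabilityMeasure X := fun n => ⟨μseq (φ n), hprob _⟩
  let μP : ProbabilityMeasure X := ⟨μ, hμprob⟩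
  have hws : Tendsto μsP atTop (𝓝 μP) :=
    ProbabilityMeasure.tendsto_iff_forall_integral_tendsto.mpr
      (fun f => hlim f.toContinuousMap)
  -- key claim: α-invariance of integrals of continuous functions
  have key : ∀ g : C(X, ℝ), (∫ x, g (α x) ∂μ) = ∫ x, g x ∂μ := by
    intro g
    set M : ℝ := ‖g‖ with hMdef
    have hM : 0 ≤ M := norm_nonneg g
    have hgb : ∀ x, |g x| ≤ M := fun x => by
      simpa [Real.norm_eq_abs] using g.norm_coe_le_norm x
    have hgαb : ∀ x, |g (α x)| ≤ M := fun x => hgb (α x)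
    have hgα_meas : Measurable fun x => g (α x) := g.continuous.measurable.comp hα
    have main : ∀ ε : ℝ, 0 < ε → ε ≤ 1 →
        |(∫ x, g (α x) ∂μ) - ∫ x, g x ∂μ| ≤ 4 * M * ε := by
      intro ε hε hε1
      -- choose m with liminf of masses > 1 - ε
      obtain ⟨m, hm⟩ := (hmass.eventually_const_lt (show (1:ℝ) - ε < 1 by linarith)).exists
      have hev : ∀ᶠ n in atTop, 1 - ε < ((μseq n) (Xm m)).toReal :=
        eventually_lt_of_lt_liminf hm
          (isBoundedUnder_of ⟨0, fun n => ENNReal.toReal_nonneg⟩)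
      -- Tietze extension of g ∘ α from Xm m, with values in [-M, M]
      have hgαcont : ContinuousOn (fun x => g (α x)) (Xm m) :=
        g.continuous.comp_continuousOn (hcont m)
      obtain ⟨h, hht, hhres⟩ :=
        ContinuousMap.exists_restrict_eq_forall_mem_of_closed
          (ContinuousMap.mk ((Xm m).restrict (fun x => g (α x))) hgαcont.restrict)
          (t := Set.Icc (-M) M)
          (fun x => abs_le.mp (hgαb x))
          (Set.nonempty_Icc.mpr (by linarith))
          (hclosed m)
      have hhb : ∀ x, |h x| ≤ M := fun x => abs_le.mpr (hht x)
      have heqh : ∀ x ∈ Xm m, h x = g (α x) := by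
        intro x hx
        have := DFunLike.congr_fun hhres (⟨x, hx⟩ : (Xm m))
        exact this
      -- integrability
      have hintμ : Integrable (fun x => g (α x)) μ := stmt0_aux_integrable μ hgα_meas hgαb
      have hinth : Integrable (fun x => h x) μ :=
        stmt0_aux_integrable μ h.continuous.measurable hhb
      -- sequences
      set a : ℕ → ℝ := fun n => ∫ x, g (α x) ∂(μseq (φ n)) with ha
      set b : ℕ → ℝ := fun n => ∫ x, g x ∂(μseq (φ n)) with hb
      set c : ℕ → ℝ := fun n => ∫ x, h x ∂(μseq (φ n)) with hc
      have hab : Tendsto (fun n => a n - b n) atTop (𝓝 0) := (hconv g).comp hφtop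
      have hblim : Tendsto b atTop (𝓝 (∫ x, g x ∂μ)) := hlim g
      have hclim : Tendsto c atTop (𝓝 (∫ x, h x ∂μ)) := hlim h
      -- eventual bound |a n - c n| ≤ 2 M ε
      have hac : ∀ᶠ n in atTop, |a n - c n| ≤ 2 * M * ε := by
        filter_upwards [hφtop.eventually hev] with n hn
        haveI := hprob (φ n)
        have hdiff := stmt0_aux_diff (μseq (φ n))
          (stmt0_aux_integrable _ hgα_meas hgαb)
          (stmt0_aux_integrable _ h.continuous.measurable hhb)
          (hclosed m).measurableSet hM hgαb hhb (fun x hx => (heqh x hx).symm)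
        have hsmall : ((μseq (φ n)) (Xm m)ᶜ).toReal ≤ ε := by
          rw [hcompl _ (hprob (φ n)) m]; linarith
        calc |a n - c n| ≤ 2 * M * ((μseq (φ n)) (Xm m)ᶜ).toReal := hdiff
          _ ≤ 2 * M * ε := by
              apply mul_le_mul_of_nonneg_left hsmall (by linarith)
      -- step 1 : |∫ g dμ - ∫ h dμ| ≤ 2 M ε
      have step1 : |(∫ x, g x ∂μ) - ∫ x, h x ∂μ| ≤ 2 * M * ε := by
        have hd : Tendsto (fun n => a n - c n) atTop
            (𝓝 ((∫ x, g x ∂μ) - ∫ x, h x ∂μ)) := by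
          have : Tendsto (fun n => (a n - b n) + (b n - c n)) atTop
              (𝓝 (0 + ((∫ x, g x ∂μ) - ∫ x, h x ∂μ))) := hab.add (hblim.sub hclim)
          simpa using this
        exact le_of_tendsto hd.abs hac
      -- step 2 : μ ((Xm m)ᶜ) ≤ ε (portmanteau)
      have step2 : (μ (Xm m)ᶜ).toReal ≤ ε := by
        have hupper : atTop.limsup (fun n => (μseq (φ n)) (Xm m)) ≤ μ (Xm m) :=
          ProbabilityMeasure.limsup_measure_closed_le_of_tendsto hws (hclosed m)
        have hlower : ENNReal.ofReal (1 - ε) ≤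
            atTop.limsup (fun n => (μseq (φ n)) (Xm m)) := by
          apply le_limsup_of_frequently_le _ (isBoundedUnder_of ⟨⊤, fun _ => le_top⟩)
          apply Eventually.frequently
          filter_upwards [hφtop.eventually hev] with n hn
          have h1 : ENNReal.ofReal (1 - ε) ≤
              ENNReal.ofReal (((μseq (φ n)) (Xm m)).toReal) :=
            ENNReal.ofReal_le_ofReal hn.le
          rwa [ENNReal.ofReal_toReal (measure_ne_top _ _)] at h1
        have hmXm : (1:ℝ) - ε ≤ (μ (Xm m)).toReal := by
          have := ENNReal.toReal_mono (measure_ne_top μ _) (hlower.trans hupper)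
          rwa [ENNReal.toReal_ofReal (by linarith)] at this
        rw [hcompl μ hμprob m]
        linarith
      -- step 3 : |∫ h dμ - ∫ g∘α dμ| ≤ 2 M ε
      have step3 : |(∫ x, h x ∂μ) - ∫ x, g (α x) ∂μ| ≤ 2 * M * ε := by
        have hdiff := stmt0_aux_diff μ hinth hintμ (hclosed m).measurableSet hM hhb hgαb heqh
        calc |(∫ x, h x ∂μ) - ∫ x, g (α x) ∂μ| ≤ 2 * M * (μ (Xm m)ᶜ).toReal := hdiff
          _ ≤ 2 * M * ε := mul_le_mul_of_nonneg_left step2 (by linarith)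
      -- combine
      have habs := abs_add_le ((∫ x, g (α x) ∂μ) - ∫ x, h x ∂μ) ((∫ x, h x ∂μ) - ∫ x, g x ∂μ)
      have e1 : |(∫ x, g (α x) ∂μ) - ∫ x, h x ∂μ| ≤ 2 * M * ε := by
        rw [abs_sub_comm]; exact step3
      have e2 : |(∫ x, h x ∂μ) - ∫ x, g x ∂μ| ≤ 2 * M * ε := by
        rw [abs_sub_comm]; exact step1
      calc |(∫ x, g (α x) ∂μ) - ∫ x, g x ∂μ|
          = |((∫ x, g (α x) ∂μ) - ∫ x, h x ∂μ) + ((∫ x, h x ∂μ) - ∫ x, g x ∂μ)| := by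
            ring_nf
        _ ≤ |(∫ x, g (α x) ∂μ) - ∫ x, h x ∂μ| + |(∫ x, h x ∂μ) - ∫ x, g x ∂μ| := habs
        _ ≤ 4 * M * ε := by linarith
    -- conclude equality from the ε-estimates
    have hsmall : ∀ δ : ℝ, 0 < δ → |(∫ x, g (α x) ∂μ) - ∫ x, g x ∂μ| ≤ δ := by
      intro δ hδ
      have hden : (0:ℝ) < 4 * M + 1 := by linarith
      set ε : ℝ := min (δ / (4 * M + 1)) 1 with hεdef
      have hεpos : 0 < ε := lt_min (div_pos hδ hden) one_pos
      have hε1 : ε ≤ 1 := min_le_right _ _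
      have h1 := main ε hεpos hε1
      have h2 : 4 * M * ε ≤ δ := by
        have hεle : ε ≤ δ / (4 * M + 1) := min_le_left _ _
        have : 4 * M * ε ≤ 4 * M * (δ / (4 * M + 1)) :=
          mul_le_mul_of_nonneg_left hεle (by linarith)
        have hfrac : 4 * M * (δ / (4 * M + 1)) ≤ δ := by
          rw [mul_div_assoc']
          rw [div_le_iff₀ hden]
          nlinarith
        linarith
      linarith
    have : |(∫ x, g (α x) ∂μ) - ∫ x, g x ∂μ| ≤ 0 := by
      by_contra hcon
      push_neg at hcon
      have := hsmall (|(∫ x, g (α x) ∂μ) - ∫ x, g x ∂μ| / 2) (by linarith)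
      linarith
    have := abs_nonpos_iff.mp this
    linarith [sub_eq_zero.mp this, this]
  -- conclude α-invariance of μ
  haveI : IsProbabilityMeasure (Measure.map (fun x => α x) μ) :=
    Measure.isProbabilityMeasure_map hα.aemeasurable
  apply ext_of_forall_lintegral_eq_of_IsFiniteMeasure
  intro f
  have hf_cont : Continuous fun x => ((f x : ℝ≥0) : ℝ≥0∞) :=
    ENNReal.continuous_coe.comp f.continuous
  rw [lintegral_map hf_cont.measurable hα]
  have hfRcont : Continuous fun x => ((f x : ℝ≥0) : ℝ) := NNReal.continuous_coe.comp f.continuous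
  let gf : C(X, ℝ) := ContinuousMap.mk _ hfRcont
  have hfb : ∀ x, |((f x : ℝ≥0) : ℝ)| ≤ ‖gf‖ := by
    intro x
    rw [← Real.norm_eq_abs]
    exact gf.norm_coe_le_norm x
  have h1 : Integrable (fun x => ((f x : ℝ≥0) : ℝ)) μ :=
    stmt0_aux_integrable μ hfRcont.measurable hfb
  have h2 : Integrable (fun x => ((f (α x) : ℝ≥0) : ℝ)) μ :=
    stmt0_aux_integrable μ (hfRcont.measurable.comp hα) (fun x => hfb (α x))
  rw [lintegral_coe_eq_integral (fun x => f (α x)) h2, lintegral_coe_eq_integral _ h1]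
  congr 1
  exact key gf
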